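/- Let (A_n)_{n≥0}, (B_n)_{n≥0}, (C_n)_{n≥1} be real sequences with A_n ≠ 0 for all n, set C_0 := 0, and define polynomials by p_{-1} = 0, p_0 = 1 and p_{n+1}(x) = (A_n x + B_n) p_n(x) − C_n p_{n-1}(x) for n ≥ 0. Let ν be a finite Borel measure on ℝ all of whose absolute moments ∫|x|^k dν are finite, let λ_1,…,λ_m be nonzero reals, and for n = (n_1,…,n_m) ∈ ℕ^m set I(n) = ∫_ℝ ∏_{j=1}^m p_{n_j}(λ_j x) dν(x) (with p index −1 interpreted as the zero polynomial). Then for all n ∈ ℕ^m and all j ≠ k in {1,…,m}: (1/(A_{n_j}λ_j)) I_j^+(n) − (1/(A_{n_k}λ_k)) I_k^+(n) = (B_{n_j}/(A_{n_j}λ_j) − B_{n_k}/(A_{n_k}λ_k)) I(n) − (C_{n_j}/(A_{n_j}λ_j)) I_j^-(n) + (C_{n_k}/(A_{n_k}λ_k)) I_k^-(n), where the terms with C_{n_j} or C_{n_k} vanish when n_j = 0 resp. n_k = 0 (since C_0 = 0). -/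

import Mathlib

open Finset MeasureTheory

namespace Paper

/-- the basic difference system satisfied by the integrals
`I(n) = ∫ ∏_j p_{n_j}(λ_j x) dν(x)`, where the `p_n` are defined by
`p_0 = 1`, `p_1(x) = A_0 x + B_0`, `p_{n+1} = (A_n x + B_n) p_n - C_n p_{n-1}`,
with `C_0 = 0` (so the terms with `C_{n_j}` vanish when `n_j = 0`). -/
theorem difference_system_for_linearization_integrals
    (A B C : ℕ → ℝ) (hA : ∀ n, A n ≠ 0) (hC0 : C 0 = 0)
    (p : ℕ → ℝ → ℝ)
    (hp0 : ∀ x, p 0 x = 1)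
    (hp1 : ∀ x, p 1 x = A 0 * x + B 0)
    (hprec : ∀ (n : ℕ) (x : ℝ),
      p (n + 2) x = (A (n + 1) * x + B (n + 1)) * p (n + 1) x - C (n + 1) * p n x)
    (ν : Measure ℝ) [IsFiniteMeasure ν]
    (hmom : ∀ k : ℕ, Integrable (fun x : ℝ => |x| ^ k) ν)
    (m : ℕ) (lam : Fin m → ℝ) (hlam : ∀ j, lam j ≠ 0)
    (I : (Fin m → ℕ) → ℝ)
    (hI : ∀ n : Fin m → ℕ, I n = ∫ x, ∏ j : Fin m, p (n j) (lam j * x) ∂ν) :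
    ∀ (n : Fin m → ℕ) (j k : Fin m), j ≠ k →
      (1 / (A (n j) * lam j)) * I (Function.update n j (n j + 1))
          - (1 / (A (n k) * lam k)) * I (Function.update n k (n k + 1))
        = (B (n j) / (A (n j) * lam j) - B (n k) / (A (n k) * lam k)) * I n
            - (C (n j) / (A (n j) * lam j)) * I (Function.update n j (n j - 1))
            + (C (n k) / (A (n k) * lam k)) * I (Function.update n k (n k - 1)) := by
  -- p n is a polynomial function
  have hpoly : ∀ n : ℕ, ∃ q : Polynomial ℝ, ∀ x, p n x = q.eval x := by
    intro n
    induction n using Nat.strong_induction_on with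
    | _ n ih =>
      match n with
      | 0 => exact ⟨1, by simp [hp0]⟩
      | 1 => exact ⟨Polynomial.C (A 0) * Polynomial.X + Polynomial.C (B 0), by simp [hp1]⟩
      | (k+2) =>
        obtain ⟨q1, hq1⟩ := ih (k+1) (by omega)
        obtain ⟨q0, hq0⟩ := ih k (by omega)
        exact ⟨(Polynomial.C (A (k+1)) * Polynomial.X + Polynomial.C (B (k+1))) * q1
          - Polynomial.C (C (k+1)) * q0, fun x => by simp [hprec, hq1, hq0]⟩
  -- polynomials are integrable
  have hpint : ∀ q : Polynomial ℝ, Integrable (fun x => q.eval x) ν := by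
    intro q
    have hx : ∀ i : ℕ, Integrable (fun x : ℝ => x ^ i) ν := fun i =>
      (hmom i).mono' (continuous_pow i).aestronglyMeasurable
        (ae_of_all _ fun x => by simp [abs_pow])
    have : (fun x => q.eval x)
        = fun x => ∑ i ∈ Finset.range (q.natDegree + 1), q.coeff i * x ^ i :=
      funext fun x => q.eval_eq_sum_range x
    rw [this]
    exact integrable_finset_sum _ fun i _ => (hx i).const_mul _
  set f : (Fin m → ℕ) → ℝ → ℝ := fun n x => ∏ i : Fin m, p (n i) (lam i * x) with hf
  have hint : ∀ n : Fin m → ℕ, Integrable (f n) ν := by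
    intro n
    choose q hq using hpoly
    have : f n = fun x =>
        (∏ i : Fin m, (q (n i)).comp (Polynomial.C (lam i) * Polynomial.X)).eval x := by
      funext x
      rw [Polynomial.eval_prod]
      exact Finset.prod_congr rfl fun i _ => by simp [hq, Polynomial.eval_comp]
    rw [this]
    exact hpint _
  -- unified recurrence
  have hrec : ∀ (n : ℕ) (x : ℝ), p (n + 1) x = (A n * x + B n) * p n x - C n * p (n - 1) x := by
    intro n x
    cases n with
    | zero => simp [hp1, hp0, hC0]
    | succ k => simpa using hprec k x
  -- product with updated index
  have hupd : ∀ (n : Fin m → ℕ) (j : Fin m) (v : ℕ) (x : ℝ),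
      f (Function.update n j v) x
        = p v (lam j * x) * ∏ i ∈ Finset.univ.erase j, p (n i) (lam i * x) := by
    intro n j v x
    have h1 : (fun i => p ((Function.update n j v) i) (lam i * x))
        = Function.update (fun i => p (n i) (lam i * x)) j (p v (lam j * x)) := by
      funext i
      rcases eq_or_ne i j with rfl | h
      · simp
      · simp [Function.update_of_ne h]
    show (∏ i : Fin m, p ((Function.update n j v) i) (lam i * x)) = _
    rw [h1, Finset.prod_update_of_mem (Finset.mem_univ j), Finset.sdiff_singleton_eq_erase]
  have hP : ∀ (n : Fin m → ℕ) (j : Fin m) (x : ℝ),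
      f n x = p (n j) (lam j * x) * ∏ i ∈ Finset.univ.erase j, p (n i) (lam i * x) :=
    fun n j x => (Finset.mul_prod_erase _ _ (Finset.mem_univ j)).symm
  -- key pointwise identity at each index
  have hkey : ∀ (n : Fin m → ℕ) (j : Fin m) (x : ℝ),
      (1 / (A (n j) * lam j)) * f (Function.update n j (n j + 1)) x
        = x * f n x + (B (n j) / (A (n j) * lam j)) * f n x
          - (C (n j) / (A (n j) * lam j)) * f (Function.update n j (n j - 1)) x := by
    intro n j x
    have ha : A (n j) * lam j ≠ 0 := mul_ne_zero (hA _) (hlam _)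
    rw [hupd, hupd, hP n j, hrec (n j) (lam j * x)]
    have hAj := hA (n j)
    have hlj := hlam j
    field_simp
  intro n j k _
  have haj : A (n j) * lam j ≠ 0 := mul_ne_zero (hA _) (hlam _)
  have hak : A (n k) * lam k ≠ 0 := mul_ne_zero (hA _) (hlam _)
  have hIeq : ∀ n : Fin m → ℕ, I n = ∫ x, f n x ∂ν := hI
  have I1 : Integrable (fun x => 1 / (A (n j) * lam j) * f (Function.update n j (n j + 1)) x) ν :=
    (hint _).const_mul _
  have I2 : Integrable (fun x => 1 / (A (n k) * lam k) * f (Function.update n k (n k + 1)) x) ν :=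
    (hint _).const_mul _
  have I3 : Integrable (fun x =>
      (B (n j) / (A (n j) * lam j) - B (n k) / (A (n k) * lam k)) * f n x) ν :=
    (hint _).const_mul _
  have I4 : Integrable (fun x =>
      C (n j) / (A (n j) * lam j) * f (Function.update n j (n j - 1)) x) ν :=
    (hint _).const_mul _
  have I5 : Integrable (fun x =>
      C (n k) / (A (n k) * lam k) * f (Function.update n k (n k - 1)) x) ν :=
    (hint _).const_mul _
  have I34 : Integrable (fun x =>
      (B (n j) / (A (n j) * lam j) - B (n k) / (A (n k) * lam k)) * f n x
        - C (n j) / (A (n j) * lam j) * f (Function.update n j (n j - 1)) x) ν := I3.sub I4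
  rw [hIeq, hIeq, hIeq, hIeq, hIeq]
  rw [← integral_const_mul, ← integral_const_mul, ← integral_const_mul,
      ← integral_const_mul, ← integral_const_mul]
  rw [← integral_sub I1 I2, ← integral_sub I3 I4, ← integral_add I34 I5]
  refine integral_congr_ae (ae_of_all _ fun x => ?_)
  have hj := hkey n j x
  have hk := hkey n k x
  simp only at hj hk ⊢
  rw [hj, hk]
  ring

end Paper
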